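/- arXiv:math-ph/0408035 — 3 statements merged into one kernel-verified Lean document; each statement's English description precedes it below -/
import Mathlib

section
/- For density matrices ρ, σ, the squared Bures distance d(ρ,σ)² = 2(1 - f(ρ,σ)) satisfies d(ρ,σ)² ≤ D(ρ,σ), where D(ρ,σ) = Tr|ρ - σ| is the trace distance and f(ρ,σ) = Tr|ρ^{1/2}σ^{1/2}| is the fidelity. -/
open Matrix Kronecker
open scoped ComplexOrder

open scoped Classical in
/-- Positive semidefinite square root (zero if the matrix is not PSD). -/
noncomputable def psqrt {n : Type*} [Fintype n] [DecidableEq n] (A : Matrix n n ℂ) : Matrix n n ℂ :=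
  if h : A.PosSemidef then
    (h.1.eigenvectorUnitary : Matrix n n ℂ) * diagonal ((↑) ∘ (√·) ∘ h.1.eigenvalues) *
      (star h.1.eigenvectorUnitary : Matrix n n ℂ) else 0

/-- Matrix absolute value `|A| = √(Aᴴ A)`. -/
noncomputable def matAbs {n : Type*} [Fintype n] [DecidableEq n] (A : Matrix n n ℂ) : Matrix n n ℂ :=
  psqrt (Aᴴ * A)

namespace BuresAux

variable {n : Type*} [Fintype n] [DecidableEq n] {A : Matrix n n ℂ}

open scoped MatrixOrder in
lemma psqrt_eq_sqrt {B : Matrix n n ℂ} (hB : B.PosSemidef) : psqrt B = CFC.sqrt B := by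
  rw [psqrt, dif_pos hB, CFC.sqrt_eq_real_sqrt B hB.nonneg, cfcₙ_eq_cfc,
    Matrix.IsHermitian.cfc_eq hB.1]
  rfl

open scoped MatrixOrder in
lemma psqrt_psd {B : Matrix n n ℂ} (hB : B.PosSemidef) : (psqrt B).PosSemidef := by
  rw [psqrt_eq_sqrt hB]
  exact Matrix.nonneg_iff_posSemidef.mp (CFC.sqrt_nonneg B)

open scoped MatrixOrder in
lemma psqrt_mul_self {B : Matrix n n ℂ} (hB : B.PosSemidef) : psqrt B * psqrt B = B := by
  rw [psqrt_eq_sqrt hB]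
  exact CFC.sqrt_mul_sqrt_self B hB.nonneg

open scoped MatrixOrder in
lemma psqrt_eq_of_sq {B R : Matrix n n ℂ} (hB : B.PosSemidef) (hR : R.PosSemidef)
    (h : R * R = B) : psqrt B = R := by
  rw [psqrt_eq_sqrt hB]
  exact (CFC.sqrt_eq_iff B R hB.nonneg hR.nonneg).mpr h

lemma star_mul_self_eigen (hA : A.IsHermitian) :
    (star (hA.eigenvectorUnitary : Matrix n n ℂ)) * (hA.eigenvectorUnitary : Matrix n n ℂ) = 1 :=
  Matrix.mem_unitaryGroup_iff'.mp hA.eigenvectorUnitary.2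

lemma mycfc_mul (hA : A.IsHermitian) (f g : ℝ → ℝ) :
    hA.cfc f * hA.cfc g = hA.cfc (fun x => f x * g x) := by
  unfold Matrix.IsHermitian.cfc
  simp only [Unitary.conjStarAlgAut_apply, Unitary.coe_star]
  simp only [← Matrix.mul_assoc]
  rw [Matrix.mul_assoc (_ * _) (star _), star_mul_self_eigen hA, Matrix.mul_one,
    Matrix.mul_assoc _ (diagonal _) (diagonal _), Matrix.diagonal_mul_diagonal]
  have : (fun i => (RCLike.ofReal ∘ f ∘ hA.eigenvalues) i * (RCLike.ofReal ∘ g ∘ hA.eigenvalues) i)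
      = (RCLike.ofReal ∘ (fun x => f x * g x) ∘ hA.eigenvalues : n → ℂ) := by
    funext i; simp [Function.comp]
  rw [this, Matrix.mul_assoc]

lemma mycfc_add (hA : A.IsHermitian) (f g : ℝ → ℝ) :
    hA.cfc f + hA.cfc g = hA.cfc (fun x => f x + g x) := by
  unfold Matrix.IsHermitian.cfc
  simp only [Unitary.conjStarAlgAut_apply, Unitary.coe_star]
  have : (fun i => (RCLike.ofReal ∘ f ∘ hA.eigenvalues) i + (RCLike.ofReal ∘ g ∘ hA.eigenvalues) i)
      = (RCLike.ofReal ∘ (fun x => f x + g x) ∘ hA.eigenvalues : n → ℂ) := by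
    funext i; simp [Function.comp]
  rw [← Matrix.add_mul, ← Matrix.mul_add, Matrix.diagonal_add, this]

lemma mycfc_sub (hA : A.IsHermitian) (f g : ℝ → ℝ) :
    hA.cfc f - hA.cfc g = hA.cfc (fun x => f x - g x) := by
  have := mycfc_add hA (fun x => f x - g x) g
  simp only [sub_add_cancel] at this
  rw [← this, add_sub_cancel_right]

lemma mycfc_psd (hA : A.IsHermitian) (f : ℝ → ℝ) (hf : ∀ x, 0 ≤ f x) :
    (hA.cfc f).PosSemidef := by
  unfold Matrix.IsHermitian.cfc
  simp only [Unitary.conjStarAlgAut_apply, Unitary.coe_star]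
  rw [Matrix.star_eq_conjTranspose]
  apply Matrix.PosSemidef.mul_mul_conjTranspose_same
  apply Matrix.PosSemidef.diagonal
  intro i
  simpa [Function.comp] using Complex.zero_le_real.mpr (hf _)

lemma mycfc_id (hA : A.IsHermitian) : hA.cfc (fun x => x) = A := by
  unfold Matrix.IsHermitian.cfc
  exact hA.spectral_theorem.symm

lemma mycfc_trace (hA : A.IsHermitian) (f : ℝ → ℝ) :
    (hA.cfc f).trace = ∑ i, (f (hA.eigenvalues i) : ℂ) := by
  unfold Matrix.IsHermitian.cfc
  simp only [Unitary.conjStarAlgAut_apply, Unitary.coe_star]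
  rw [Matrix.trace_mul_cycle, star_mul_self_eigen hA, one_mul, Matrix.trace_diagonal]
  rfl

lemma mycfc_one (hA : A.IsHermitian) : hA.cfc (fun _ => 1) = 1 := by
  unfold Matrix.IsHermitian.cfc
  simp only [Unitary.conjStarAlgAut_apply, Unitary.coe_star]
  have : diagonal (RCLike.ofReal ∘ (fun _ : ℝ => (1:ℝ)) ∘ hA.eigenvalues) = (1 : Matrix n n ℂ) := by
    ext i j
    simp [Matrix.diagonal_apply, Matrix.one_apply, Function.comp]
  rw [this, Matrix.mul_one]
  exact Matrix.mem_unitaryGroup_iff.mp hA.eigenvectorUnitary.2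

lemma mycfc_congr (hA : A.IsHermitian) {f g : ℝ → ℝ}
    (h : ∀ i, f (hA.eigenvalues i) = g (hA.eigenvalues i)) : hA.cfc f = hA.cfc g := by
  unfold Matrix.IsHermitian.cfc
  have : (RCLike.ofReal ∘ f ∘ hA.eigenvalues : n → ℂ) = RCLike.ofReal ∘ g ∘ hA.eigenvalues := by
    funext i; simp [Function.comp, h i]
  rw [this]

lemma mytrace_eq_sum (hA : A.IsHermitian) (M : Matrix n n ℂ) :
    M.trace = ∑ i, star (⇑(hA.eigenvectorBasis i)) ⬝ᵥ (M *ᵥ ⇑(hA.eigenvectorBasis i)) := by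
  have h1 : (hA.eigenvectorUnitary : Matrix n n ℂ) * (star (hA.eigenvectorUnitary : Matrix n n ℂ)) = 1 :=
    Matrix.mem_unitaryGroup_iff.mp hA.eigenvectorUnitary.2
  have h2 : M.trace = ((star (hA.eigenvectorUnitary : Matrix n n ℂ)) * M * (hA.eigenvectorUnitary : Matrix n n ℂ)).trace := by
    rw [Matrix.trace_mul_cycle, h1, one_mul]
  rw [h2, Matrix.trace]
  congr 1
  funext i
  simp only [Matrix.diag_apply, Matrix.mul_apply, dotProduct, Matrix.mulVec,
    Matrix.star_apply, Pi.star_apply, dotProduct, Finset.sum_mul, Finset.mul_sum,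
    hA.eigenvectorUnitary_apply]
  rw [Finset.sum_comm]
  congr 1; funext j; congr 1; funext k
  ring

lemma mybasis_selfdot (hA : A.IsHermitian) (i : n) :
    star (⇑(hA.eigenvectorBasis i)) ⬝ᵥ (⇑(hA.eigenvectorBasis i)) = 1 := by
  have h := hA.eigenvectorBasis.orthonormal.1 i
  have h2 : (inner ℂ (hA.eigenvectorBasis i) (hA.eigenvectorBasis i) : ℂ) = 1 := by
    rw [inner_self_eq_norm_sq_to_K, h]; norm_num
  rw [EuclideanSpace.inner_eq_star_dotProduct, dotProduct_comm] at h2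
  exact h2

lemma cs_step (M : Matrix n n ℂ) (hH : (Mᴴ * M).PosSemidef) (i : n) :
    (star (⇑(hH.1.eigenvectorBasis i)) ⬝ᵥ (M *ᵥ ⇑(hH.1.eigenvectorBasis i))).re
      ≤ Real.sqrt (hH.1.eigenvalues i) := by
  set v := hH.1.eigenvectorBasis i with hv
  set w : EuclideanSpace ℂ n := (WithLp.equiv 2 (n → ℂ)).symm (M *ᵥ ⇑v) with hw
  have hvnorm : ‖v‖ = 1 := hH.1.eigenvectorBasis.orthonormal.1 i
  have hinner : (inner ℂ v w : ℂ) = star (⇑v) ⬝ᵥ (M *ᵥ ⇑v) := by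
    rw [EuclideanSpace.inner_eq_star_dotProduct, dotProduct_comm]; rfl
  have hww : (inner ℂ w w : ℂ) = ((hH.1.eigenvalues i : ℝ) : ℂ) := by
    rw [EuclideanSpace.inner_eq_star_dotProduct, dotProduct_comm]
    show star (M *ᵥ ⇑v) ⬝ᵥ (M *ᵥ ⇑v) = _
    rw [star_mulVec, dotProduct_mulVec, vecMul_vecMul, ← dotProduct_mulVec]
    show star (⇑v) ⬝ᵥ ((Mᴴ * M) *ᵥ ⇑(hH.1.eigenvectorBasis i)) = _
    rw [hH.1.mulVec_eigenvectorBasis i, RCLike.real_smul_eq_coe_smul (K := ℂ),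
      dotProduct_smul]
    rw [hv, mybasis_selfdot hH.1 i]
    simp
  have hwnorm : ‖w‖ = Real.sqrt (hH.1.eigenvalues i) := by
    have h2 : ‖w‖ ^ 2 = hH.1.eigenvalues i := by
      have := norm_sq_eq_re_inner (𝕜 := ℂ) w
      rw [hww] at this
      simpa using this
    rw [← h2, Real.sqrt_sq (norm_nonneg w)]
  calc (star (⇑v) ⬝ᵥ (M *ᵥ ⇑v)).re = (inner ℂ v w : ℂ).re := by rw [hinner]
    _ ≤ ‖(inner ℂ v w : ℂ)‖ := Complex.re_le_norm _
    _ ≤ ‖v‖ * ‖w‖ := norm_inner_le_norm v w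
    _ = Real.sqrt (hH.1.eigenvalues i) := by rw [hvnorm, hwnorm, one_mul]

lemma trace_re_nonneg {M : Matrix n n ℂ} (h : M.PosSemidef) : 0 ≤ M.trace.re := by
  rw [Matrix.trace, Complex.re_sum]
  apply Finset.sum_nonneg
  intro i _
  have := h.re_dotProduct_nonneg (Pi.single i 1)
  simpa [Matrix.diag, dotProduct, Pi.single_apply, Matrix.mulVec] using this

lemma trace_mul_psd_re_nonneg {P Q : Matrix n n ℂ} (hP : P.PosSemidef) (hQ : Q.PosSemidef) :
    0 ≤ ((P * Q).trace).re := by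
  obtain ⟨R, hRpsd, hRR⟩ : ∃ R : Matrix n n ℂ, R.PosSemidef ∧ R * R = Q :=
    ⟨psqrt Q, psqrt_psd hQ, psqrt_mul_self hQ⟩
  have h1 : (P * Q).trace = (R * P * R).trace := by
    rw [← hRR, ← Matrix.mul_assoc, Matrix.trace_mul_cycle]
  rw [h1]
  apply trace_re_nonneg
  have := hP.conjTranspose_mul_mul_same R
  rwa [hRpsd.isHermitian.eq] at this

/-- the key trace inequality: `Re (Tr M) ≤ Tr |M|`. -/
lemma re_trace_le_trace_matAbs (M : Matrix n n ℂ) :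
    (M.trace).re ≤ ((matAbs M).trace).re := by
  have hH : (Mᴴ * M).PosSemidef := Matrix.posSemidef_conjTranspose_mul_self M
  have habs : matAbs M = hH.1.cfc Real.sqrt := by
    apply psqrt_eq_of_sq hH (mycfc_psd _ _ fun x => Real.sqrt_nonneg x)
    rw [mycfc_mul,
      mycfc_congr hH.1 (g := fun x => x) (fun i => Real.mul_self_sqrt (hH.eigenvalues_nonneg i)),
      mycfc_id]
  rw [habs, mycfc_trace, Complex.re_sum, mytrace_eq_sum hH.1 M, Complex.re_sum]
  apply Finset.sum_le_sum
  intro i _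
  simpa using cs_step M hH i

lemma matAbs_herm {X : Matrix n n ℂ} (hX : X.IsHermitian) :
    matAbs X = hX.cfc (fun t => |t|) := by
  have hH : (Xᴴ * X).PosSemidef := Matrix.posSemidef_conjTranspose_mul_self X
  apply psqrt_eq_of_sq hH (mycfc_psd _ _ fun x => abs_nonneg x)
  rw [mycfc_mul, show (fun x => |x| * |x|) = fun x : ℝ => x * x from
      funext fun x => abs_mul_abs_self x, ← mycfc_mul, mycfc_id, hX.eq]

lemma trace_matAbs_herm {X : Matrix n n ℂ} (hX : X.IsHermitian) :
    ((matAbs X).trace).re = ∑ i, |hX.eigenvalues i| := by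
  rw [matAbs_herm hX, mycfc_trace, Complex.re_sum]
  simp

lemma ps_bound {X W : Matrix n n ℂ} (hX : X.IsHermitian)
    (hW1 : (1 - W).PosSemidef) (hW2 : (1 + W).PosSemidef) :
    ((W * X).trace).re ≤ ∑ i, |hX.eigenvalues i| := by
  rw [mytrace_eq_sum hX (W * X), Complex.re_sum]
  apply Finset.sum_le_sum
  intro i _
  set w := ⇑(hX.eigenvectorBasis i) with hw
  have hXw : X *ᵥ w = ((hX.eigenvalues i : ℝ) : ℂ) • w := by
    rw [hw, hX.mulVec_eigenvectorBasis i, RCLike.real_smul_eq_coe_smul (K := ℂ)]; rfl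
  have key : (star w ⬝ᵥ ((W * X) *ᵥ w)) = ((hX.eigenvalues i : ℝ) : ℂ) * (star w ⬝ᵥ (W *ᵥ w)) := by
    rw [← Matrix.mulVec_mulVec, hXw, Matrix.mulVec_smul, dotProduct_smul, smul_eq_mul]
  set t := (star w ⬝ᵥ (W *ᵥ w)).re with ht
  have hre : (star w ⬝ᵥ ((W * X) *ᵥ w)).re = hX.eigenvalues i * t := by
    rw [key]
    simp [Complex.mul_re, ht]
  have hd1 : t ≤ 1 := by
    have h0 := hW1.re_dotProduct_nonneg w
    rw [Matrix.sub_mulVec, dotProduct_sub, Matrix.one_mulVec] at h0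
    rw [hw, mybasis_selfdot hX i] at h0
    simp only [RCLike.re_to_complex, Complex.sub_re, Complex.one_re] at h0
    rw [ht, hw]
    linarith
  have hd2 : -1 ≤ t := by
    have h0 := hW2.re_dotProduct_nonneg w
    rw [Matrix.add_mulVec, dotProduct_add, Matrix.one_mulVec] at h0
    rw [hw, mybasis_selfdot hX i] at h0
    simp only [RCLike.re_to_complex, Complex.add_re, Complex.one_re] at h0
    rw [ht, hw]
    linarith
  rw [hre]
  calc hX.eigenvalues i * t ≤ |hX.eigenvalues i * t| := le_abs_self _
    _ = |hX.eigenvalues i| * |t| := abs_mul _ _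
    _ ≤ |hX.eigenvalues i| * 1 :=
        mul_le_mul_of_nonneg_left (abs_le.mpr ⟨hd2, hd1⟩) (abs_nonneg _)
    _ = _ := mul_one _

noncomputable def sgn (t : ℝ) : ℝ := if 0 ≤ t then 1 else -1

lemma sgn_mul_self (t : ℝ) : sgn t * t = |t| := by
  unfold sgn; split
  · rw [one_mul, abs_of_nonneg ‹_›]
  · rw [neg_one_mul, abs_of_neg (lt_of_not_ge ‹_›)]

lemma self_mul_sgn (t : ℝ) : t * sgn t = |t| := by
  rw [mul_comm, sgn_mul_self]

lemma sgn_le_one (t : ℝ) : sgn t ≤ 1 := by unfold sgn; split <;> norm_num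

lemma neg_one_le_sgn (t : ℝ) : -1 ≤ sgn t := by unfold sgn; split <;> norm_num

end BuresAux

open BuresAux

theorem bures_sq_le_traceDist {n : Type*} [Fintype n] [DecidableEq n]
    (ρ σ : Matrix n n ℂ) (hρ : ρ.PosSemidef) (hσ : σ.PosSemidef)
    (hρ1 : ρ.trace = 1) (hσ1 : σ.trace = 1) :
    2 * (1 - ((matAbs (psqrt ρ * psqrt σ)).trace).re) ≤ ((matAbs (ρ - σ)).trace).re := by
  have hA : (psqrt ρ).PosSemidef := psqrt_psd hρ
  have hB : (psqrt σ).PosSemidef := psqrt_psd hσ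
  set A := psqrt ρ
  set B := psqrt σ
  have hAA : A * A = ρ := psqrt_mul_self hρ
  have hBB : B * B = σ := psqrt_mul_self hσ
  have hpsρ : psqrt ρ = A := rfl
  have hpsσ : psqrt σ = B := rfl
  have hCh : (A - B).IsHermitian := hA.isHermitian.sub hB.isHermitian
  have hXh : (ρ - σ).IsHermitian := hρ.isHermitian.sub hσ.isHermitian
  set W := hCh.cfc sgn with hWdef
  set T := hCh.cfc (fun t => |t|) with hTdef
  set Cpos := hCh.cfc (fun t => max t 0) with hCpdef
  set Cneg := hCh.cfc (fun t => max (-t) 0) with hCndef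
  have hid : hCh.cfc (fun t => t) = A - B := mycfc_id hCh
  have k1 : W * (A - B) = T := by
    have h := mycfc_mul hCh sgn (fun t => t)
    rw [hid] at h
    rw [hWdef, h, hTdef]
    exact mycfc_congr hCh fun i => sgn_mul_self _
  have k2 : (A - B) * W = T := by
    have h := mycfc_mul hCh (fun t => t) sgn
    rw [hid] at h
    rw [hWdef, h, hTdef]
    exact mycfc_congr hCh fun i => self_mul_sgn _
  have hW1 : (1 - W).PosSemidef := by
    rw [← mycfc_one hCh, hWdef, mycfc_sub]
    exact mycfc_psd _ _ fun x => by simpa using sgn_le_one x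
  have hW2 : (1 + W).PosSemidef := by
    rw [← mycfc_one hCh, hWdef, mycfc_add]
    exact mycfc_psd _ _ fun x => by linarith [neg_one_le_sgn x]
  have claim1 : (W * (ρ - σ)).trace = (T * (A + B)).trace := by
    have hX2 : (ρ - σ) + (ρ - σ) = (A + B) * (A - B) + (A - B) * (A + B) := by
      rw [← hAA, ← hBB]; noncomm_ring
    have hsum : W * (ρ - σ) + W * (ρ - σ)
        = W * ((A + B) * (A - B)) + W * ((A - B) * (A + B)) := by
      rw [← Matrix.mul_add, hX2, Matrix.mul_add]
    have t2 : (W * ((A + B) * (A - B))).trace = (T * (A + B)).trace := by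
      rw [Matrix.trace_mul_comm, Matrix.mul_assoc, Matrix.trace_mul_comm ((A+B)),
        Matrix.mul_assoc, ← Matrix.mul_assoc, k2]
    have t3 : (W * ((A - B) * (A + B))).trace = (T * (A + B)).trace := by
      rw [← Matrix.mul_assoc, k1]
    have := congrArg Matrix.trace hsum
    rw [Matrix.trace_add, Matrix.trace_add, t2, t3] at this
    linear_combination this / 2
  have hCpos : Cpos.PosSemidef := mycfc_psd _ _ fun x => le_max_right _ _
  have hCneg : Cneg.PosSemidef := mycfc_psd _ _ fun x => le_max_right _ _
  have claim2 : (((A - B) * (A - B)).trace).re ≤ ((T * (A + B)).trace).re := by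
    have hTsum : T = Cpos + Cneg := by
      rw [hCpdef, hCndef, mycfc_add, hTdef]
      refine mycfc_congr hCh fun i => ?_
      set t := hCh.eigenvalues i
      rcases le_total 0 t with h | h
      · rw [abs_of_nonneg h, max_eq_left h, max_eq_right (neg_nonpos.mpr h), add_zero]
      · rw [abs_of_nonpos h, max_eq_right h, max_eq_left (neg_nonneg.mpr h), zero_add]
    have hCC : (A - B) * (A - B) = Cpos * (A - B) - Cneg * (A - B) := by
      have h1 := mycfc_mul hCh (fun t => max t 0) (fun t => t)
      have h2 := mycfc_mul hCh (fun t => max (-t) 0) (fun t => t)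
      have h3 := mycfc_mul hCh (fun t => t) (fun t => t)
      rw [hid] at h1 h2 h3
      rw [hCpdef, hCndef, h1, h2, mycfc_sub, h3]
      refine mycfc_congr hCh fun i => ?_
      set t := hCh.eigenvalues i
      rcases le_total 0 t with h | h
      · rw [max_eq_left h, max_eq_right (neg_nonpos.mpr h)]; ring
      · rw [max_eq_right h, max_eq_left (neg_nonneg.mpr h)]; ring
    have hident : Cpos * ((A + B) - (A - B)) + Cneg * ((A + B) + (A - B))
        = T * (A + B) - (A - B) * (A - B) := by
      rw [hTsum, hCC]; noncomm_ring
    have e1 : (A + B) - (A - B) = B + B := by abel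
    have e2 : (A + B) + (A - B) = A + A := by abel
    have p1 : 0 ≤ ((Cpos * (B + B)).trace).re := trace_mul_psd_re_nonneg hCpos (hB.add hB)
    have p2 : 0 ≤ ((Cneg * (A + A)).trace).re := trace_mul_psd_re_nonneg hCneg (hA.add hA)
    rw [e1, e2] at hident
    have := congrArg (fun M : Matrix n n ℂ => (Matrix.trace M).re) hident
    simp only [Matrix.trace_add, Matrix.trace_sub, Complex.add_re, Complex.sub_re] at this
    linarith
  have claim3 : (((A - B) * (A - B)).trace).re = 2 - 2 * ((A * B).trace).re := by
    have hexp : (A - B) * (A - B) = ρ + σ - (A * B) - (B * A) := by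
      rw [← hAA, ← hBB]; noncomm_ring
    have tBA : (B * A).trace = (A * B).trace := Matrix.trace_mul_comm B A
    rw [hexp, Matrix.trace_sub, Matrix.trace_sub, Matrix.trace_add, hρ1, hσ1, tBA]
    simp [Complex.sub_re, Complex.add_re]
    ring
  have claim4 : ((W * (ρ - σ)).trace).re ≤ ((matAbs (ρ - σ)).trace).re := by
    rw [trace_matAbs_herm hXh]
    exact ps_bound hXh hW1 hW2
  have claim5 : ((A * B).trace).re ≤ ((matAbs (A * B)).trace).re := re_trace_le_trace_matAbs _
  have c1re := congrArg Complex.re claim1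
  linarith
end

section
/- For positive semidefinite n×n matrices R, S, the supremum over all matrices X, Y satisfying X†X = R, Y†Y = S of Re Tr(X†Y) equals Tr√(R^{1/2} S R^{1/2}). -/
open Matrix Kronecker
open scoped ComplexOrder

section UhlmannAux

variable {n : Type*} [Fintype n] [DecidableEq n]

lemma psqrt_spec {A : Matrix n n ℂ} (hA : A.PosSemidef) :
    (psqrt A).PosSemidef ∧ psqrt A * psqrt A = A := by
  rw [psqrt, dif_pos hA]
  have hsp := hA.1.spectral_theorem
  rw [Unitary.conjStarAlgAut_apply] at hsp
  have hUU : star (hA.1.eigenvectorUnitary : Matrix n n ℂ) * (hA.1.eigenvectorUnitary : Matrix n n ℂ) = 1 :=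
    Matrix.UnitaryGroup.star_mul_self _
  set U : Matrix n n ℂ := (hA.1.eigenvectorUnitary : Matrix n n ℂ) with hU
  set D : Matrix n n ℂ := diagonal ((↑) ∘ (√·) ∘ hA.1.eigenvalues) with hD
  constructor
  · have hD' : D.PosSemidef := by
      rw [hD, posSemidef_diagonal_iff]; intro i
      exact Complex.zero_le_real.mpr (Real.sqrt_nonneg _)
    simpa [Matrix.star_eq_conjTranspose] using hD'.mul_mul_conjTranspose_same U
  · calc U * D * star U * (U * D * star U) = U * (D * (star U * U) * D) * star U := by
          simp only [Matrix.mul_assoc]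
      _ = U * diagonal (RCLike.ofReal ∘ hA.1.eigenvalues) * star U := by
          rw [hUU, Matrix.mul_one, hD, diagonal_mul_diagonal]
          congr 2; congr 1; funext i
          simp only [Function.comp_apply]
          rw [← Complex.ofReal_mul, Real.mul_self_sqrt (hA.eigenvalues_nonneg i)]
          rfl
      _ = A := hsp.symm

lemma toEuclideanLin_mul' (A B : Matrix n n ℂ) :
    Matrix.toEuclideanLin (A * B)
      = (Matrix.toEuclideanLin A) ∘ₗ (Matrix.toEuclideanLin B) := by
  apply LinearMap.ext; intro x
  simp [Matrix.toEuclideanLin_apply, Matrix.mulVec_mulVec]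

lemma toEuclideanLin_one' :
    Matrix.toEuclideanLin (1 : Matrix n n ℂ) = LinearMap.id := by
  apply LinearMap.ext; intro x
  simp [Matrix.toEuclideanLin_apply]

lemma norm_toEuclideanLin_eq {A P : Matrix n n ℂ} (hP : P.IsHermitian)
    (hPA : P * P = Aᴴ * A) (x : EuclideanSpace ℂ n) :
    ‖Matrix.toEuclideanLin A x‖ = ‖Matrix.toEuclideanLin P x‖ := by
  have key : ∀ M : Matrix n n ℂ, ‖Matrix.toEuclideanLin M x‖ ^ 2
      = RCLike.re (inner ℂ x (Matrix.toEuclideanLin (Mᴴ * M) x) : ℂ) := by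
    intro M
    rw [toEuclideanLin_mul', Matrix.toEuclideanLin_conjTranspose_eq_adjoint,
      LinearMap.comp_apply, LinearMap.adjoint_inner_right]
    rw [inner_self_eq_norm_sq (𝕜 := ℂ)]
  rw [← sq_eq_sq₀ (norm_nonneg _) (norm_nonneg _), key A, key P, hP.eq, hPA]

/-- Polar decomposition of a square complex matrix: `A = U * √(AᴴA)` with `U` unitary. -/
lemma polar_decomp (A : Matrix n n ℂ) :
    ∃ U : Matrix n n ℂ, Uᴴ * U = 1 ∧ U * Uᴴ = 1 ∧ A = U * psqrt (Aᴴ * A) := by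
  have hAA : (Aᴴ * A).PosSemidef := Matrix.posSemidef_conjTranspose_mul_self A
  obtain ⟨hPpsd, hPP⟩ := psqrt_spec hAA
  set P := psqrt (Aᴴ * A) with hPdef
  have hnorm : ∀ x, ‖Matrix.toEuclideanLin A x‖ = ‖Matrix.toEuclideanLin P x‖ :=
    norm_toEuclideanLin_eq hPpsd.1 hPP
  set f := Matrix.toEuclideanLin A with hf
  set p := Matrix.toEuclideanLin P with hp
  have hker : LinearMap.ker p ≤ LinearMap.ker f := by
    intro x hx
    rw [LinearMap.mem_ker] at hx ⊢
    have h := hnorm x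
    rw [hx, norm_zero] at h
    exact norm_eq_zero.mp h
  let L0 : ↥(LinearMap.range p) →ₗ[ℂ] EuclideanSpace ℂ n :=
    ((LinearMap.ker p).liftQ f hker) ∘ₗ (p.quotKerEquivRange.symm : _ →ₗ[ℂ] _)
  have hL0 : ∀ (x : EuclideanSpace ℂ n) (h : p x ∈ LinearMap.range p),
      L0 ⟨p x, h⟩ = f x := by
    intro x h
    show ((LinearMap.ker p).liftQ f hker) (p.quotKerEquivRange.symm ⟨p x, h⟩) = f x
    rw [LinearMap.quotKerEquivRange_symm_apply_image]
    simp [Submodule.mkQ_apply]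
  have hLn : ∀ s : LinearMap.range p, ‖L0 s‖ = ‖s‖ := by
    rintro ⟨y, hy⟩
    obtain ⟨x, rfl⟩ := hy
    show ‖L0 ⟨p x, LinearMap.mem_range_self p x⟩‖ = ‖p x‖
    rw [hL0 x _]
    exact hnorm x
  let L : ↥(LinearMap.range p) →ₗᵢ[ℂ] EuclideanSpace ℂ n := ⟨L0, hLn⟩
  let Uli := L.extend
  let W : Matrix n n ℂ := Matrix.toEuclideanLin.symm Uli.toLinearMap
  have hW : Matrix.toEuclideanLin W = Uli.toLinearMap :=
    Matrix.toEuclideanLin.apply_symm_apply _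
  have hWP : A = W * P := by
    apply Matrix.toEuclideanLin.injective
    rw [toEuclideanLin_mul', hW]
    apply LinearMap.ext; intro x
    have h1 : Uli (p x) = L ⟨p x, LinearMap.mem_range_self p x⟩ :=
      L.extend_apply ⟨p x, LinearMap.mem_range_self p x⟩
    show f x = Uli (p x)
    rw [h1]
    exact (hL0 x _).symm
  have hU : Wᴴ * W = 1 := by
    apply Matrix.toEuclideanLin.injective
    rw [toEuclideanLin_mul', Matrix.toEuclideanLin_conjTranspose_eq_adjoint, hW,
      toEuclideanLin_one']
    apply LinearMap.ext; intro x
    refine ext_inner_left ℂ fun y => ?_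
    rw [LinearMap.comp_apply, LinearMap.adjoint_inner_right]
    exact Uli.inner_map_map y x
  exact ⟨W, hU, mul_eq_one_comm.mp hU, hWP⟩

/-- For `M` with unitary rows and `T` positive semidefinite, `Re Tr (M T) ≤ Re Tr T`. -/
lemma re_trace_mul_le {M T : Matrix n n ℂ} (hM : M * Mᴴ = 1) (hT : T.PosSemidef) :
    ((M * T).trace).re ≤ (T.trace).re := by
  have hH := hT.1
  set V : Matrix n n ℂ := (hH.eigenvectorUnitary : Matrix n n ℂ) with hVdef
  set d : n → ℝ := hH.eigenvalues with hddef
  set D : Matrix n n ℂ := Matrix.diagonal (fun i => (d i : ℂ)) with hDdef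
  have hspec : T = V * D * Vᴴ := by
    have := hH.spectral_theorem
    simp only [Unitary.conjStarAlgAut_apply] at this
    exact this
  have hV1 : V * Vᴴ = 1 := by
    have h := (Matrix.mem_unitaryGroup_iff).mp hH.eigenvectorUnitary.2
    rwa [Matrix.star_eq_conjTranspose] at h
  have hV2 : Vᴴ * V = 1 := mul_eq_one_comm.mp hV1
  set N : Matrix n n ℂ := Vᴴ * M * V with hNdef
  have htr : (M * T).trace = (N * D).trace := by
    rw [hspec]
    have h1 : M * (V * D * Vᴴ) = (M * (V * D)) * Vᴴ := by simp [Matrix.mul_assoc]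
    have h2 : Vᴴ * (M * (V * D)) = N * D := by simp [hNdef, Matrix.mul_assoc]
    rw [h1, Matrix.trace_mul_comm, h2]
  have hNN : N * Nᴴ = 1 := by
    have h1 : Nᴴ = Vᴴ * Mᴴ * V := by
      simp [hNdef, Matrix.conjTranspose_mul, Matrix.mul_assoc]
    rw [h1]
    calc Vᴴ * M * V * (Vᴴ * Mᴴ * V) = Vᴴ * (M * ((V * Vᴴ) * (Mᴴ * V))) := by
          simp [Matrix.mul_assoc]
      _ = Vᴴ * (M * (Mᴴ * V)) := by rw [hV1, one_mul]
      _ = Vᴴ * ((M * Mᴴ) * V) := by rw [← Matrix.mul_assoc M]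
      _ = Vᴴ * V := by rw [hM, one_mul]
      _ = 1 := hV2
  have hrow : ∀ i, (N i i).re ≤ 1 := by
    intro i
    have h1 : (∑ j, Complex.normSq (N i j) : ℝ) = 1 := by
      have h := congrFun (congrFun hNN i) i
      simp only [Matrix.mul_apply, Matrix.conjTranspose_apply, Matrix.one_apply_eq] at h
      have h2 : ∀ j, N i j * star (N i j) = (Complex.normSq (N i j) : ℂ) := fun j => by
        rw [show star (N i j) = (starRingEnd ℂ) (N i j) from rfl, Complex.mul_conj]
      simp only [h2] at h
      have := congrArg Complex.re h
      push_cast at this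
      simpa using this
    have h3 : Complex.normSq (N i i) ≤ 1 := by
      rw [← h1]
      exact Finset.single_le_sum (fun j _ => Complex.normSq_nonneg _) (Finset.mem_univ i)
    calc (N i i).re ≤ ‖N i i‖ := Complex.re_le_norm _
      _ = Real.sqrt (Complex.normSq (N i i)) := Complex.norm_def _
      _ ≤ 1 := Real.sqrt_le_one.mpr h3
  have hd : ∀ i, 0 ≤ d i := fun i => hT.eigenvalues_nonneg i
  have htrT : (T.trace).re = ∑ i, d i := by
    rw [hspec]
    have h1 : V * D * Vᴴ = V * (D * Vᴴ) := by rw [Matrix.mul_assoc]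
    rw [h1, Matrix.trace_mul_comm, Matrix.mul_assoc, hV2, Matrix.mul_one]
    simp [hDdef, Matrix.trace_diagonal]
  have htrN : ((N * D).trace).re = ∑ i, (N i i).re * d i := by
    rw [Matrix.trace]
    simp only [Matrix.diag_apply, Matrix.mul_diagonal, hDdef]
    rw [Complex.re_sum]
    congr 1; funext i
    simp [Complex.mul_re]
  rw [htr, htrN, htrT]
  apply Finset.sum_le_sum
  intro i _
  calc (N i i).re * d i ≤ 1 * d i :=
      mul_le_mul_of_nonneg_right (hrow i) (hd i)
    _ = d i := one_mul _

end UhlmannAux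

theorem uhlmann_sup_overlap {n : Type*} [Fintype n] [DecidableEq n]
    (R S : Matrix n n ℂ) (hR : R.PosSemidef) (hS : S.PosSemidef) :
    sSup {x : ℝ | ∃ X Y : Matrix n n ℂ, Xᴴ * X = R ∧ Yᴴ * Y = S ∧
        x = ((Xᴴ * Y).trace).re} =
      ((psqrt (psqrt R * S * psqrt R)).trace).re := by
  obtain ⟨hPpsd, hPP⟩ := psqrt_spec hR
  obtain ⟨hQpsd, hQQ⟩ := psqrt_spec hS
  set P := psqrt R with hPdef
  set Q := psqrt S with hQdef
  have hPSP : (P * S * P).PosSemidef := by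
    have h := hS.mul_mul_conjTranspose_same P
    rwa [hPpsd.1.eq] at h
  obtain ⟨hTpsd, hTT⟩ := psqrt_spec hPSP
  set T := psqrt (P * S * P) with hTdef
  set B := Q * P with hBdef
  have hBB : Bᴴ * B = P * S * P := by
    rw [hBdef, Matrix.conjTranspose_mul, hPpsd.1.eq, hQpsd.1.eq]
    calc P * Q * (Q * P) = P * (Q * Q) * P := by simp [Matrix.mul_assoc]
      _ = P * S * P := by rw [hQQ]
  obtain ⟨V, hV1, hV2, hVB⟩ := polar_decomp B
  have hBVT : B = V * T := by rw [hVB, hBB]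
  apply IsGreatest.csSup_eq
  constructor
  · refine ⟨V * P, Q, ?_, ?_, ?_⟩
    · rw [Matrix.conjTranspose_mul, hPpsd.1.eq]
      calc P * Vᴴ * (V * P) = P * (Vᴴ * V) * P := by simp [Matrix.mul_assoc]
        _ = P * P := by rw [hV1]; simp
        _ = R := hPP
    · rw [hQpsd.1.eq, hQQ]
    · have h1 : (V * P)ᴴ * Q = P * (Vᴴ * Q) := by
        rw [Matrix.conjTranspose_mul, hPpsd.1.eq, Matrix.mul_assoc]
      rw [h1, Matrix.trace_mul_comm]
      have h2 : Vᴴ * Q * P = Vᴴ * B := by rw [hBdef, Matrix.mul_assoc]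
      rw [h2, hBVT, ← Matrix.mul_assoc, hV1, Matrix.one_mul]
  · rintro x ⟨X, Y, hX, hY, rfl⟩
    obtain ⟨U₁, hU₁, hU₁', hXp⟩ := polar_decomp X
    obtain ⟨U₂, hU₂, hU₂', hYp⟩ := polar_decomp Y
    rw [hX] at hXp
    rw [hY] at hYp
    set K := U₁ᴴ * U₂ * V with hKdef
    have hKK : K * Kᴴ = 1 := by
      have h1 : Kᴴ = Vᴴ * U₂ᴴ * U₁ := by
        rw [hKdef]; simp [Matrix.conjTranspose_mul, Matrix.mul_assoc]
      rw [hKdef, h1]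
      calc U₁ᴴ * U₂ * V * (Vᴴ * U₂ᴴ * U₁)
          = U₁ᴴ * (U₂ * (V * Vᴴ * (U₂ᴴ * U₁))) := by simp [Matrix.mul_assoc]
        _ = U₁ᴴ * (U₂ * (U₂ᴴ * U₁)) := by rw [hV2, one_mul]
        _ = U₁ᴴ * (U₂ * U₂ᴴ * U₁) := by rw [Matrix.mul_assoc]
        _ = U₁ᴴ * U₁ := by rw [hU₂', one_mul]
        _ = 1 := hU₁
    have htr : (Xᴴ * Y).trace = (K * T).trace := by
      rw [hXp, hYp]
      have h1 : (U₁ * P)ᴴ * (U₂ * Q) = P * (U₁ᴴ * U₂ * Q) := by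
        rw [Matrix.conjTranspose_mul, hPpsd.1.eq]; simp [Matrix.mul_assoc]
      rw [h1, Matrix.trace_mul_comm]
      have h2 : U₁ᴴ * U₂ * Q * P = U₁ᴴ * U₂ * B := by
        rw [hBdef, Matrix.mul_assoc]
      rw [h2, hBVT, ← Matrix.mul_assoc, hKdef, Matrix.mul_assoc]
    rw [htr]
    exact re_trace_mul_le hKK hTpsd
end

section
/- Monotonicity of fidelity under trace-preserving completely positive maps given in Kraus form: if T(ω) = Σ_j K_j ω K_j† with Σ_j K_j† K_j = I, then for density matrices ρ, σ, the fidelity satisfies f(T(ρ), T(σ)) ≥ f(ρ, σ), where f(ρ,σ) = Tr√(ρ^{1/2} σ ρ^{1/2}). -/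
open Matrix Kronecker
open scoped ComplexOrder

set_option linter.unusedSectionVars false
set_option linter.unusedVariables false
set_option maxHeartbeats 1000000

section aux
variable {n : Type*} [Fintype n] [DecidableEq n] {A : Matrix n n ℂ}


lemma psqrt_posSemidef (hA : A.PosSemidef) : (psqrt A).PosSemidef := by
  unfold psqrt; rw [dif_pos hA]
  have hD : (diagonal ((↑) ∘ (√·) ∘ hA.1.eigenvalues : n → ℂ)).PosSemidef := by
    rw [posSemidef_diagonal_iff]; intro i
    simp only [Function.comp_apply]
    exact Complex.zero_le_real.mpr (Real.sqrt_nonneg _)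
  have := hD.mul_mul_conjTranspose_same (hA.1.eigenvectorUnitary : Matrix n n ℂ)
  rwa [← star_eq_conjTranspose, ← Unitary.coe_star] at this

lemma psqrt_mul_self (hA : A.PosSemidef) : psqrt A * psqrt A = A := by
  unfold psqrt; rw [dif_pos hA]
  set U := hA.1.eigenvectorUnitary
  have hU : (star U : Matrix n n ℂ) * (U : Matrix n n ℂ) = 1 := Unitary.coe_star_mul_self U
  calc (U : Matrix n n ℂ) * diagonal ((↑) ∘ (√·) ∘ hA.1.eigenvalues) * (star U : Matrix n n ℂ) *
        ((U : Matrix n n ℂ) * diagonal ((↑) ∘ (√·) ∘ hA.1.eigenvalues) * (star U : Matrix n n ℂ))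
      = (U : Matrix n n ℂ) * (diagonal ((↑) ∘ (√·) ∘ hA.1.eigenvalues) *
          ((star U : Matrix n n ℂ) * (U : Matrix n n ℂ)) *
          diagonal ((↑) ∘ (√·) ∘ hA.1.eigenvalues)) * (star U : Matrix n n ℂ) := by
        simp only [Matrix.mul_assoc]
    _ = (U : Matrix n n ℂ) * diagonal (RCLike.ofReal ∘ hA.1.eigenvalues) * star (U : Matrix n n ℂ) := by
        rw [hU, Matrix.mul_one, diagonal_mul_diagonal]
        refine congrArg (· * _) (congrArg (_ * ·) (congrArg diagonal (funext fun i => ?_)))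
        simp only [Function.comp_apply]
        rw [← Complex.ofReal_mul, Real.mul_self_sqrt (hA.eigenvalues_nonneg i)]
        rfl
    _ = A := hA.1.spectral_theorem.symm

lemma psqrt_herm (hA : A.PosSemidef) : (psqrt A)ᴴ = psqrt A :=
  (psqrt_posSemidef hA).1

lemma psd_of_idem {E : Matrix n n ℂ} (h1 : Eᴴ = E) (h2 : E * E = E) : E.PosSemidef := by
  have h : E = Eᴴ * E := by rw [h1, h2]
  rw [h]; exact posSemidef_conjTranspose_mul_self E


lemma polar {k m : Type*} [Fintype k] [DecidableEq k] [Fintype m] [DecidableEq m] (A : Matrix k m ℂ) :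
    ∃ W : Matrix k m ℂ, A = W * psqrt (Aᴴ * A) ∧ psqrt (Aᴴ * A) = Wᴴ * A ∧
      (1 - Wᴴ * W).PosSemidef ∧ (1 - W * Wᴴ).PosSemidef := by
  classical
  have hAA : (Aᴴ * A).PosSemidef := posSemidef_conjTranspose_mul_self A
  set G : Matrix m m ℂ := psqrt (Aᴴ * A) with hGdef
  have hG : G.PosSemidef := psqrt_posSemidef hAA
  have hGG : G * G = Aᴴ * A := psqrt_mul_self hAA
  -- spectral theorem
  set u : Matrix m m ℂ := (hG.1.eigenvectorUnitary : Matrix m m ℂ) with hudef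
  set d : m → ℝ := hG.1.eigenvalues with hddef
  have hu2 : star u * u = 1 := mem_unitaryGroup_iff'.mp hG.1.eigenvectorUnitary.2
  have hspec : G = u * diagonal (RCLike.ofReal ∘ d) * star u := hG.1.spectral_theorem
  have key : ∀ f g : m → ℂ, (u * diagonal f * star u) * (u * diagonal g * star u)
      = u * diagonal (fun i => f i * g i) * star u := by
    intro f g
    calc (u * diagonal f * star u) * (u * diagonal g * star u)
        = u * diagonal f * (star u * u) * diagonal g * star u := by
          simp only [Matrix.mul_assoc]
      _ = u * diagonal (fun i => f i * g i) * star u := by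
          rw [hu2, Matrix.mul_one, Matrix.mul_assoc u, diagonal_mul_diagonal]
  have hstar : ∀ f : m → ℂ, (∀ i, star (f i) = f i) →
      (u * diagonal f * star u)ᴴ = u * diagonal f * star u := by
    intro f hf
    have hsf : star f = f := funext fun i => hf i
    rw [← star_eq_conjTranspose, Matrix.star_mul, Matrix.star_mul, star_star,
      star_eq_conjTranspose (diagonal f), diagonal_conjTranspose, hsf, Matrix.mul_assoc]
  set f0 : m → ℂ := RCLike.ofReal ∘ d with hf0
  set fp : m → ℂ := fun i => if d i = 0 then 0 else (d i : ℂ)⁻¹ with hfp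
  set fc : m → ℂ := fun i => if d i = 0 then 0 else 1 with hfc
  set Gp : Matrix m m ℂ := u * diagonal fp * star u with hGp
  set Pi : Matrix m m ℂ := u * diagonal fc * star u with hPi
  have hGGp : G * Gp = Pi := by
    rw [hspec, key]
    have : (fun i => f0 i * fp i) = fc := by
      funext i
      by_cases h : d i = 0
      · simp [hfp, hfc, hf0, h]
      · have := Complex.ofReal_ne_zero.mpr h
        simp [hfp, hfc, hf0, h, mul_inv_cancel₀ this]
    rw [this]
  have hGpG : Gp * G = Pi := by
    rw [hspec, key]
    have : (fun i => fp i * f0 i) = fc := by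
      funext i
      by_cases h : d i = 0
      · simp [hfp, hfc, hf0, h]
      · have := Complex.ofReal_ne_zero.mpr h
        simp [hfp, hfc, hf0, h, inv_mul_cancel₀ this]
    rw [this]
  have hPiG : Pi * G = G := by
    rw [hspec, key]
    have : (fun i => fc i * f0 i) = f0 := by
      funext i
      by_cases h : d i = 0
      · simp [hfc, hf0, h]
      · simp [hfc, hf0, h]
    rw [this]
  have hGPi : G * Pi = G := by
    rw [hspec, key]
    have : (fun i => f0 i * fc i) = f0 := by
      funext i
      by_cases h : d i = 0
      · simp [hfc, hf0, h]
      · simp [hfc, hf0, h]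
    rw [this]
  have hGpPi : Gp * Pi = Gp := by
    rw [key]
    have : (fun i => fp i * fc i) = fp := by
      funext i
      by_cases h : d i = 0
      · simp [hfp, hfc, h]
      · simp [hfp, hfc, h]
    rw [this]
  have hPiPi : Pi * Pi = Pi := by
    rw [key]
    have : (fun i => fc i * fc i) = fc := by
      funext i
      by_cases h : d i = 0
      · simp [hfc, h]
      · simp [hfc, h]
    rw [this]
  have hPih : Piᴴ = Pi := by
    refine hstar fc fun i => ?_
    by_cases h : d i = 0
    · simp [hfc, h]
    · simp [hfc, h]
  have hGph : Gpᴴ = Gp := by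
    refine hstar fp fun i => ?_
    by_cases h : d i = 0
    · simp [hfp, h]
    · simp only [hfp, if_neg h, ← Complex.ofReal_inv]
      exact Complex.conj_ofReal _
  have hsubh : (1 - Pi)ᴴ = 1 - Pi := by
    rw [conjTranspose_sub, conjTranspose_one, hPih]
  -- A * Pi = A
  have hAPi : A * Pi = A := by
    have hzero : (A * (1 - Pi))ᴴ * (A * (1 - Pi)) = 0 := by
      have e1 : (A * (1 - Pi))ᴴ * (A * (1 - Pi)) = (1 - Pi) * ((G * G) * (1 - Pi)) := by
        rw [conjTranspose_mul, hsubh, hGG]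
        simp only [Matrix.mul_assoc]
      rw [e1]
      have e2 : (G * G) * (1 - Pi) = G * (G * (1 - Pi)) := by rw [Matrix.mul_assoc]
      have e3 : G * (1 - Pi) = 0 := by
        rw [Matrix.mul_sub, Matrix.mul_one, hGPi, sub_self]
      rw [e2, e3, Matrix.mul_zero, Matrix.mul_zero]
    have hz : A * (1 - Pi) = 0 := Matrix.conjTranspose_mul_self_eq_zero.mp hzero
    rw [Matrix.mul_sub, Matrix.mul_one] at hz
    have := sub_eq_zero.mp hz
    exact this.symm
  have hWW : (A * Gp)ᴴ * (A * Gp) = Pi := by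
    rw [conjTranspose_mul, hGph]
    calc Gp * Aᴴ * (A * Gp) = Gp * (Aᴴ * A * Gp) := by simp only [Matrix.mul_assoc]
      _ = Gp * (G * G * Gp) := by rw [hGG]
      _ = Gp * (G * (G * Gp)) := by rw [Matrix.mul_assoc G G Gp]
      _ = Gp * (G * Pi) := by rw [hGGp]
      _ = Gp * G := by rw [hGPi]
      _ = Pi := hGpG
  refine ⟨A * Gp, ?_, ?_, ?_, ?_⟩
  · rw [Matrix.mul_assoc, hGpG, hAPi]
  · rw [conjTranspose_mul, hGph]
    calc G = Pi * G := (hPiG).symm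
      _ = Gp * G * G := by rw [hGpG]
      _ = Gp * (G * G) := by rw [Matrix.mul_assoc Gp G G]
      _ = Gp * (Aᴴ * A) := by rw [hGG]
      _ = Gp * Aᴴ * A := by rw [Matrix.mul_assoc Gp Aᴴ A]
  · rw [hWW]
    refine psd_of_idem hsubh ?_
    rw [Matrix.mul_sub, Matrix.mul_one, Matrix.sub_mul, Matrix.one_mul, hPiPi]
    abel
  · have hWPi : A * Gp * Pi = A * Gp := by rw [Matrix.mul_assoc, hGpPi]
    have hEh : (A * Gp * (A * Gp)ᴴ)ᴴ = A * Gp * (A * Gp)ᴴ := by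
      rw [conjTranspose_mul, conjTranspose_conjTranspose]
    have hEE : (A * Gp * (A * Gp)ᴴ) * (A * Gp * (A * Gp)ᴴ) = A * Gp * (A * Gp)ᴴ := by
      calc (A * Gp * (A * Gp)ᴴ) * (A * Gp * (A * Gp)ᴴ)
          = A * Gp * ((A * Gp)ᴴ * (A * Gp)) * (A * Gp)ᴴ := by simp only [Matrix.mul_assoc]
        _ = A * Gp * Pi * (A * Gp)ᴴ := by rw [hWW]
        _ = A * Gp * (A * Gp)ᴴ := by rw [hWPi]
    have h1 : (1 - A * Gp * (A * Gp)ᴴ)ᴴ = 1 - A * Gp * (A * Gp)ᴴ := by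
      rw [conjTranspose_sub, conjTranspose_one, hEh]
    refine psd_of_idem h1 ?_
    rw [Matrix.mul_sub, Matrix.mul_one, Matrix.sub_mul, Matrix.one_mul, hEE]
    abel

lemma psd_trace_re_nonneg {n : Type*} [Fintype n] [DecidableEq n] {A : Matrix n n ℂ}
    (hA : A.PosSemidef) : 0 ≤ A.trace.re := by
  rw [Matrix.trace]
  have h : (∑ i, A.diag i).re = ∑ i, (A.diag i).re := Complex.re_sum _ _
  rw [h]
  refine Finset.sum_nonneg fun i _ => ?_
  have := hA.re_dotProduct_nonneg (Pi.single i 1)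
  simpa [dotProduct, mulVec, Pi.single_apply, Matrix.diag] using this

lemma trace_CS {a b : Type*} [Fintype a] [Fintype b] [DecidableEq b] (X Y : Matrix a b ℂ) :
    ((Xᴴ * Y).trace).re ≤ Real.sqrt ((Xᴴ * X).trace).re * Real.sqrt ((Yᴴ * Y).trace).re := by
  have key : ∀ Z W : Matrix a b ℂ, ((Zᴴ * W).trace).re
      = ∑ p : b × a, ((starRingEnd ℂ) (Z p.2 p.1) * W p.2 p.1).re := by
    intro Z W
    rw [Matrix.trace, ← Complex.re_sum]
    congr 1
    rw [Fintype.sum_prod_type]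
    simp [Matrix.diag, Matrix.mul_apply, Matrix.conjTranspose_apply]
  rw [key, key, key]
  have habs : ∀ p : b × a, ((starRingEnd ℂ) (X p.2 p.1) * X p.2 p.1).re
      = ‖X p.2 p.1‖ ^ 2 := by
    intro p
    rw [← Complex.normSq_eq_conj_mul_self, Complex.sq_norm, Complex.ofReal_re]
  have habsY : ∀ p : b × a, ((starRingEnd ℂ) (Y p.2 p.1) * Y p.2 p.1).re
      = ‖Y p.2 p.1‖ ^ 2 := by
    intro p
    rw [← Complex.normSq_eq_conj_mul_self, Complex.sq_norm, Complex.ofReal_re]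
  simp only [habs, habsY]
  have h1 : ∑ p : b × a, ((starRingEnd ℂ) (X p.2 p.1) * Y p.2 p.1).re
      ≤ ∑ p : b × a, ‖X p.2 p.1‖ * ‖Y p.2 p.1‖ := by
    refine Finset.sum_le_sum fun p _ => ?_
    calc ((starRingEnd ℂ) (X p.2 p.1) * Y p.2 p.1).re
        ≤ ‖(starRingEnd ℂ) (X p.2 p.1) * Y p.2 p.1‖ := Complex.re_le_norm _
      _ = ‖X p.2 p.1‖ * ‖Y p.2 p.1‖ := by
          rw [norm_mul, Complex.norm_conj]
  refine h1.trans ?_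
  have h2 := Finset.sum_mul_sq_le_sq_mul_sq Finset.univ
    (fun p : b × a => ‖X p.2 p.1‖) (fun p => ‖Y p.2 p.1‖)
  have h3 : (0:ℝ) ≤ ∑ p : b × a, ‖X p.2 p.1‖ * ‖Y p.2 p.1‖ :=
    Finset.sum_nonneg fun p _ => mul_nonneg (norm_nonneg _) (norm_nonneg _)
  calc ∑ p : b × a, ‖X p.2 p.1‖ * ‖Y p.2 p.1‖
      = Real.sqrt ((∑ p : b × a, ‖X p.2 p.1‖ * ‖Y p.2 p.1‖)^2) :=
        (Real.sqrt_sq h3).symm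
    _ ≤ Real.sqrt ((∑ p : b × a, ‖X p.2 p.1‖^2) * ∑ p : b × a, ‖Y p.2 p.1‖^2) :=
        Real.sqrt_le_sqrt h2
    _ = _ := Real.sqrt_mul (Finset.sum_nonneg fun p _ => sq_nonneg _) _


section helpers2
variable {a b c : Type*} [Fintype a] [Fintype b] [Fintype c]
  [DecidableEq a] [DecidableEq b] [DecidableEq c]

lemma contr_mul {X : Matrix a b ℂ} {Y : Matrix b c ℂ}
    (hX : (1 - Xᴴ * X).PosSemidef) (hY : (1 - Yᴴ * Y).PosSemidef) :
    (1 - (X * Y)ᴴ * (X * Y)).PosSemidef := by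
  have e : 1 - (X * Y)ᴴ * (X * Y) = (1 - Yᴴ * Y) + Yᴴ * (1 - Xᴴ * X) * Y := by
    rw [conjTranspose_mul, Matrix.mul_sub, Matrix.sub_mul, Matrix.mul_one]
    have h2 : (Yᴴ * Xᴴ) * (X * Y) = Yᴴ * (Xᴴ * X) * Y := by
      simp only [Matrix.mul_assoc]
    rw [h2]
    abel
  rw [e]
  exact hY.add (hX.conjTranspose_mul_mul_same Y)

lemma trace_re_mono {A B : Matrix a a ℂ} (h : (B - A).PosSemidef) :
    A.trace.re ≤ B.trace.re := by
  have h2 : 0 ≤ (B - A).trace.re := psd_trace_re_nonneg h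
  rw [Matrix.trace_sub] at h2
  simp only [Complex.sub_re] at h2
  linarith

lemma psd_blockDiagonal {E : Matrix a a ℂ} (hE : E.PosSemidef) (J : ℕ) :
    (blockDiagonal (fun _ : Fin J => E)).PosSemidef := by
  have hE' : E = (psqrt E)ᴴ * psqrt E := by
    rw [psqrt_herm hE, psqrt_mul_self hE]
  have hfun : (fun _ : Fin J => E) = fun _ : Fin J => (psqrt E)ᴴ * psqrt E :=
    funext fun _ => hE'
  rw [hfun, blockDiagonal_mul, ← blockDiagonal_conjTranspose]
  exact posSemidef_conjTranspose_mul_self _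
end helpers2

section rowblock
variable {m n : Type*} [Fintype m] [DecidableEq m] [Fintype n] [DecidableEq n] {J : ℕ}

/-- Stack matrices `F j : Matrix m n` horizontally into an `m × (n × Fin J)` matrix. -/
def rowBlock (F : Fin J → Matrix m n ℂ) : Matrix m (n × Fin J) ℂ :=
  Matrix.of fun y p => F p.2 y p.1

lemma rowBlock_mul_conjTranspose (F G : Fin J → Matrix m n ℂ) :
    rowBlock F * (rowBlock G)ᴴ = ∑ j, F j * (G j)ᴴ := by
  ext y y'
  simp only [rowBlock, Matrix.mul_apply, Matrix.conjTranspose_apply, Matrix.sum_apply,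
    Matrix.of_apply, Fintype.sum_prod_type]
  rw [Finset.sum_comm]

lemma rowBlock_mul_blockDiagonal (F : Fin J → Matrix m n ℂ) (E : Matrix n n ℂ) :
    rowBlock F * blockDiagonal (fun _ : Fin J => E) = rowBlock (fun j => F j * E) := by
  ext y p
  simp only [rowBlock, Matrix.mul_apply, Matrix.of_apply, blockDiagonal_apply,
    Fintype.sum_prod_type]
  rw [Finset.sum_comm]
  rw [Finset.sum_eq_single p.2]
  · simp
  · intro j _ hj
    simp [hj]
  · simp

lemma posSemidef_sum {ι : Type*} (s : Finset ι) (f : ι → Matrix m m ℂ)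
    (h : ∀ i ∈ s, (f i).PosSemidef) : (∑ i ∈ s, f i).PosSemidef := by
  classical
  induction s using Finset.induction_on with
  | empty => simpa using Matrix.PosSemidef.zero
  | insert x s hx ih =>
    rw [Finset.sum_insert hx]
    exact (h _ (Finset.mem_insert_self _ _)).add
      (ih fun i hi => h i (Finset.mem_insert_of_mem hi))

end rowblock

lemma trace_mul_contraction_le {m : Type*} [Fintype m] [DecidableEq m]
    (B C : Matrix m m ℂ) (hC : (1 - C * Cᴴ).PosSemidef) :
    ((B * C).trace).re ≤ ((psqrt (Bᴴ * B)).trace).re := by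
  obtain ⟨W, hBW, hGW, hc, hc'⟩ := polar B
  have hGpsd : (psqrt (Bᴴ * B)).PosSemidef := psqrt_posSemidef (posSemidef_conjTranspose_mul_self B)
  set G := psqrt (Bᴴ * B) with hGdef
  set g := psqrt G with hg
  have hgpsd : g.PosSemidef := psqrt_posSemidef hGpsd
  have hgg : g * g = G := psqrt_mul_self hGpsd
  have hgh : gᴴ = g := psqrt_herm hGpsd
  set t := G.trace.re with ht
  have ht0 : 0 ≤ t := psd_trace_re_nonneg hGpsd
  set Z : Matrix m m ℂ := C * W with hZ
  have e1 : (B * C).trace = (gᴴ * (g * Z)).trace := by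
    rw [hgh]
    calc (B * C).trace = (W * (G * C)).trace := by rw [hBW]; simp only [Matrix.mul_assoc]
      _ = ((G * C) * W).trace := trace_mul_comm _ _
      _ = (g * (g * Z)).trace := by rw [← hgg, hZ]; simp only [Matrix.mul_assoc]
  -- contraction fact for Z
  have hZZ : (1 - Z * Zᴴ).PosSemidef := by
    have h1 : (1 - (Cᴴ)ᴴ * Cᴴ).PosSemidef := by
      rw [conjTranspose_conjTranspose]; exact hC
    have h2 : (1 - (Wᴴ)ᴴ * Wᴴ).PosSemidef := by
      rw [conjTranspose_conjTranspose]; exact hc'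
    have h3 := contr_mul h2 h1
    have e : (Wᴴ * Cᴴ)ᴴ * (Wᴴ * Cᴴ) = Z * Zᴴ := by
      rw [hZ]
      simp only [conjTranspose_mul, conjTranspose_conjTranspose, Matrix.mul_assoc]
    rwa [e] at h3
  -- second CS factor bound
  have e2 : ((g * Z)ᴴ * (g * Z)).trace.re ≤ t := by
    have eq1 : ((g * Z)ᴴ * (g * Z)).trace = ((g * (Z * Zᴴ)) * g).trace := by
      calc ((g * Z)ᴴ * (g * Z)).trace = ((Zᴴ * (g * (g * Z)))).trace := by
            rw [conjTranspose_mul, hgh]; simp only [Matrix.mul_assoc]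
        _ = ((g * (g * Z)) * Zᴴ).trace := trace_mul_comm _ _
        _ = (g * (g * (Z * Zᴴ))).trace := by simp only [Matrix.mul_assoc]
        _ = ((g * (Z * Zᴴ)) * g).trace := trace_mul_comm _ _
    rw [eq1]
    have hmono : (G - (g * (Z * Zᴴ)) * g).PosSemidef := by
      have e3 : G - (g * (Z * Zᴴ)) * g = g * (1 - Z * Zᴴ) * gᴴ := by
        rw [hgh, Matrix.mul_sub, Matrix.sub_mul, Matrix.mul_one, hgg]
      rw [e3]
      exact hZZ.mul_mul_conjTranspose_same g
    exact trace_re_mono hmono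
  have e2' : 0 ≤ ((g * Z)ᴴ * (g * Z)).trace.re :=
    psd_trace_re_nonneg (posSemidef_conjTranspose_mul_self _)
  have hCS := trace_CS g (g * Z)
  have hfirst : (gᴴ * g).trace.re = t := by rw [hgh, hgg]
  rw [e1]
  calc (gᴴ * (g * Z)).trace.re
      ≤ Real.sqrt (gᴴ * g).trace.re * Real.sqrt ((g * Z)ᴴ * (g * Z)).trace.re := hCS
    _ ≤ Real.sqrt t * Real.sqrt t := by
        rw [hfirst]
        exact mul_le_mul_of_nonneg_left (Real.sqrt_le_sqrt e2) (Real.sqrt_nonneg t)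
    _ = t := Real.mul_self_sqrt ht0

end aux

theorem fidelity_monotone_cptp {m n : Type*} [Fintype m] [DecidableEq m]
    [Fintype n] [DecidableEq n] {J : ℕ} (K : Fin J → Matrix m n ℂ)
    (hK : ∑ j, (K j)ᴴ * K j = 1)
    (ρ σ : Matrix n n ℂ) (hρ : ρ.PosSemidef) (hσ : σ.PosSemidef)
    (hρ1 : ρ.trace = 1) (hσ1 : σ.trace = 1) :
    ((psqrt (psqrt ρ * σ * psqrt ρ)).trace).re ≤
      ((psqrt (psqrt (∑ j, K j * ρ * (K j)ᴴ) * (∑ j, K j * σ * (K j)ᴴ) *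
        psqrt (∑ j, K j * ρ * (K j)ᴴ))).trace).re := by
  classical
  set r := psqrt ρ with hrdef
  set s := psqrt σ with hsdef
  have hrr : r * r = ρ := psqrt_mul_self hρ
  have hss : s * s = σ := psqrt_mul_self hσ
  have hrh : rᴴ = r := psqrt_herm hρ
  have hsh : sᴴ = s := psqrt_herm hσ
  set P := ∑ j, K j * ρ * (K j)ᴴ with hPdef
  set Q := ∑ j, K j * σ * (K j)ᴴ with hQdef
  have hP : P.PosSemidef :=
    posSemidef_sum _ _ (fun j _ => hρ.mul_mul_conjTranspose_same (K j))
  have hQ : Q.PosSemidef :=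
    posSemidef_sum _ _ (fun j _ => hσ.mul_mul_conjTranspose_same (K j))
  set p := psqrt P with hpdef
  set q := psqrt Q with hqdef
  have hpp : p * p = P := psqrt_mul_self hP
  have hqq : q * q = Q := psqrt_mul_self hQ
  have hph : pᴴ = p := psqrt_herm hP
  have hqh : qᴴ = q := psqrt_herm hQ
  -- polar decomposition of s * r
  obtain ⟨W₀, hA0, hG0, hc0, hc0'⟩ := polar (s * r)
  have hsr : (s * r)ᴴ * (s * r) = r * σ * r := by
    rw [conjTranspose_mul, hrh, hsh]
    calc r * s * (s * r) = r * (s * s) * r := by simp only [Matrix.mul_assoc]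
      _ = r * σ * r := by rw [hss]
  -- big matrices
  set Mρ := rowBlock (fun j => K j * r) with hMρdef
  set Mσ := rowBlock (fun j => K j * s) with hMσdef
  have hMρ : Mρ * Mρᴴ = P := by
    rw [hMρdef, rowBlock_mul_conjTranspose, hPdef]
    refine Finset.sum_congr rfl fun j _ => ?_
    rw [conjTranspose_mul, hrh]
    calc K j * r * (r * (K j)ᴴ) = K j * (r * r) * (K j)ᴴ := by simp only [Matrix.mul_assoc]
      _ = K j * ρ * (K j)ᴴ := by rw [hrr]
  have hMσ : Mσ * Mσᴴ = Q := by
    rw [hMσdef, rowBlock_mul_conjTranspose, hQdef]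
    refine Finset.sum_congr rfl fun j _ => ?_
    rw [conjTranspose_mul, hsh]
    calc K j * s * (s * (K j)ᴴ) = K j * (s * s) * (K j)ᴴ := by simp only [Matrix.mul_assoc]
      _ = K j * σ * (K j)ᴴ := by rw [hss]
  obtain ⟨W₁, hA1, hG1, hc1, hc1'⟩ := polar Mρᴴ
  obtain ⟨W₂, hA2, hG2, hc2, hc2'⟩ := polar Mσᴴ
  have hps1 : psqrt (Mρᴴᴴ * Mρᴴ) = p := by rw [conjTranspose_conjTranspose, hMρ]
  have hps2 : psqrt (Mσᴴᴴ * Mσᴴ) = q := by rw [conjTranspose_conjTranspose, hMσ]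
  rw [hps1] at hA1
  rw [hps2] at hA2
  have hMρeq : Mρ = p * W₁ᴴ := by
    have h := congrArg conjTranspose hA1
    rwa [conjTranspose_conjTranspose, conjTranspose_mul, hph] at h
  -- block diagonal of W₀
  set D := blockDiagonal (fun _ : Fin J => W₀) with hDdef
  have hDH : Dᴴ = blockDiagonal (fun _ : Fin J => W₀ᴴ) := by
    rw [hDdef, blockDiagonal_conjTranspose]
  set C := W₁ᴴ * Dᴴ * W₂ with hCdef
  -- the trace identity
  have step1 : (W₀ᴴ * (s * r)).trace = ∑ j, ((K j * r * W₀ᴴ) * (K j * s)ᴴ).trace := by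
    have e : ∀ j : Fin J, ((K j * r * W₀ᴴ) * (K j * s)ᴴ).trace
        = (((K j)ᴴ * K j) * (r * (W₀ᴴ * s))).trace := by
      intro j
      rw [conjTranspose_mul, hsh]
      calc ((K j * r * W₀ᴴ) * (s * (K j)ᴴ)).trace
          = ((K j * (r * (W₀ᴴ * s))) * (K j)ᴴ).trace := by simp only [Matrix.mul_assoc]
        _ = ((K j)ᴴ * (K j * (r * (W₀ᴴ * s)))).trace := trace_mul_comm _ _
        _ = (((K j)ᴴ * K j) * (r * (W₀ᴴ * s))).trace := by simp only [Matrix.mul_assoc]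
    calc (W₀ᴴ * (s * r)).trace
        = ((W₀ᴴ * s) * r).trace := by simp only [Matrix.mul_assoc]
      _ = (r * (W₀ᴴ * s)).trace := trace_mul_comm _ _
      _ = ((1 : Matrix n n ℂ) * (r * (W₀ᴴ * s))).trace := by rw [Matrix.one_mul]
      _ = ((∑ j, (K j)ᴴ * K j) * (r * (W₀ᴴ * s))).trace := by rw [hK]
      _ = ∑ j, (((K j)ᴴ * K j) * (r * (W₀ᴴ * s))).trace := by
          rw [Finset.sum_mul, Matrix.trace_sum]
      _ = ∑ j, ((K j * r * W₀ᴴ) * (K j * s)ᴴ).trace := by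
          exact (Finset.sum_congr rfl fun j _ => (e j).symm)
  have step2 : ∑ j, ((K j * r * W₀ᴴ) * (K j * s)ᴴ).trace
      = ((Mρ * Dᴴ) * Mσᴴ).trace := by
    have e3 : Mρ * Dᴴ = rowBlock (fun j => K j * r * W₀ᴴ) := by
      rw [hDH, hMρdef, rowBlock_mul_blockDiagonal]
    rw [e3, rowBlock_mul_conjTranspose, Matrix.trace_sum]
  have step3 : ((Mρ * Dᴴ) * Mσᴴ).trace = ((q * p) * C).trace := by
    rw [hMρeq, hA2, hCdef]
    calc ((p * W₁ᴴ * Dᴴ) * (W₂ * q)).trace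
        = ((p * (W₁ᴴ * Dᴴ * W₂)) * q).trace := by simp only [Matrix.mul_assoc]
      _ = (q * (p * (W₁ᴴ * Dᴴ * W₂))).trace := trace_mul_comm _ _
      _ = ((q * p) * (W₁ᴴ * Dᴴ * W₂)).trace := by simp only [Matrix.mul_assoc]
  -- contraction property of C
  have hD : (1 - Dᴴ * D).PosSemidef := by
    have h := psd_blockDiagonal hc0 J
    have e : blockDiagonal (fun _ : Fin J => 1 - W₀ᴴ * W₀) = 1 - Dᴴ * D := by
      rw [hDH, hDdef, ← blockDiagonal_mul, ← blockDiagonal_one (α := ℂ) (m := n) (o := Fin J),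
        ← blockDiagonal_sub]
      rfl
    rw [← e]
    exact h
  have hCC : (1 - C * Cᴴ).PosSemidef := by
    have h1 : (1 - (W₂ᴴ)ᴴ * W₂ᴴ).PosSemidef := by
      rw [conjTranspose_conjTranspose]; exact hc2'
    have h2 := contr_mul hD hc1
    have h3 := contr_mul h1 h2
    have e : (W₂ᴴ * (D * W₁))ᴴ * (W₂ᴴ * (D * W₁)) = C * Cᴴ := by
      rw [hCdef]
      simp only [conjTranspose_mul, conjTranspose_conjTranspose, Matrix.mul_assoc]
    rwa [e] at h3
  -- final bound
  have hsum : (psqrt (r * σ * r)).trace = ((q * p) * C).trace := by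
    rw [← hsr, hG0, step1, step2, step3]
  have hfinal := trace_mul_contraction_le (q * p) C hCC
  have hqp : (q * p)ᴴ * (q * p) = p * Q * p := by
    rw [conjTranspose_mul, hph, hqh]
    calc p * q * (q * p) = p * (q * q) * p := by simp only [Matrix.mul_assoc]
      _ = p * Q * p := by rw [hqq]
  rw [hqp] at hfinal
  rw [hsum]
  exact hfinal
end
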